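/- If v is a vertex of degree 1 in a connected undirected graph G with at least 2 vertices, then v belongs to every monitoring edge-geodetic set of G. -/

import Mathlib

open SimpleGraph

/-- A pair `{x, y}` monitors the edge `e` if `e` lies on every shortest path
between `x` and `y` in `G`. -/
def Monitors {V : Type*} (G : SimpleGraph V) (x y : V) (e : Sym2 V) : Prop :=
  ∀ p : G.Walk x y, p.IsPath → p.length = G.dist x y → e ∈ p.edges

/-- `M` is a monitoring edge-geodetic set of `G` if every edge of `G` is
monitored by some pair of vertices of `M`. -/
def IsMEGSet {V : Type*} (G : SimpleGraph V) (M : Set V) : Prop :=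
  ∀ e ∈ G.edgeSet, ∃ x ∈ M, ∃ y ∈ M, Monitors G x y e

/-- A nonempty walk starts with an edge from its first vertex. -/
lemma first_edge_aux {V : Type*} {G : SimpleGraph V} {v t : V} (q : G.Walk v t)
    (h : v ≠ t) : ∃ w, G.Adj v w ∧ s(v, w) ∈ q.edges := by
  cases q with
  | nil => exact absurd rfl h
  | cons h' q' => exact ⟨_, h', List.mem_cons_self⟩

theorem degree_one_mem_megSet {V : Type*} [Fintype V] (G : SimpleGraph V)
    [DecidableRel G.Adj] (hG : G.Connected) (hn : 2 ≤ Fintype.card V)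
    (v : V) (hv : G.degree v = 1) (M : Set V) (hM : IsMEGSet G M) :
    v ∈ M := by
  classical
  obtain ⟨u, hu⟩ := Finset.card_eq_one.mp hv
  have hadj : ∀ w, G.Adj v w ↔ w = u := by
    intro w
    rw [← SimpleGraph.mem_neighborFinset, hu, Finset.mem_singleton]
  have hvu : G.Adj v u := (hadj u).mpr rfl
  obtain ⟨x, hxM, y, hyM, hmon⟩ := hM s(v, u) (G.mem_edgeSet.mpr hvu)
  by_contra hvM
  have hx : x ≠ v := fun h => hvM (h ▸ hxM)
  have hy : y ≠ v := fun h => hvM (h ▸ hyM)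
  obtain ⟨p, hp⟩ := hG.exists_walk_length_eq_dist x y
  -- replace by the bypass, which is a path of the same (minimal) length
  set q := p.bypass with hqdef
  have hq : q.IsPath := p.bypass_isPath
  have hqlen : q.length = G.dist x y :=
    le_antisymm (hp ▸ p.length_bypass_le) (SimpleGraph.dist_le q)
  have he : s(v, u) ∈ q.edges := hmon q hq hqlen
  have hvs : v ∈ q.support := q.fst_mem_support_of_mem_edges he
  -- split q at v
  set q1 := q.takeUntil v hvs with hq1
  set q2 := q.dropUntil v hvs with hq2
  -- q2 : Walk v y, nonempty, first edge is s(v,u)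
  obtain ⟨w2, hw2, he2⟩ := first_edge_aux q2 (Ne.symm hy)
  rw [hadj] at hw2
  rw [hw2] at he2
  -- q1.reverse : Walk v x, nonempty, first edge is s(v,u)
  obtain ⟨w1, hw1, he1⟩ := first_edge_aux q1.reverse (Ne.symm hx)
  rw [hadj] at hw1
  rw [hw1] at he1
  have he1' : s(v, u) ∈ q1.edges := by
    rw [SimpleGraph.Walk.edges_reverse, List.mem_reverse] at he1
    exact he1
  -- but q's edges are nodup and q = q1 ++ q2
  have hnodup : (q1.append q2).edges.Nodup := by
    rw [SimpleGraph.Walk.take_spec q hvs]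
    exact hq.edges_nodup
  rw [SimpleGraph.Walk.edges_append, List.nodup_append] at hnodup
  exact hnodup.2.2 _ he1' _ he2 rfl
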